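/- arXiv:math/0503480 — 2 statements merged into one kernel-verified Lean document; each statement's English description precedes it below -/
import Mathlib

section
/- Let G be a bipartite finite simple graph having at least one eigenvalue greater than 2. Suppose that for every subset M of V(G) that is minimal with respect to the property that the induced subgraph G|_M has index greater than 2 (that is, λ(G|_M) > 2 but every proper induced subgraph of G|_M has index at most 2), the induced subgraph on V(G) − M is cyclotomic. Then G is a Salem graph; that is, G has exactly one eigenvalue λ > 2 and its only eigenvalue less than −2 is −λ. -/
open Polynomial

/-- The multiset of eigenvalues of the adjacency matrix of a finite simple graph. -/
noncomputable def adjEigs {V : Type} [Fintype V] (G : SimpleGraph V) : Multiset ℝ :=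
  letI := Classical.decEq V
  letI := Classical.decRel G.Adj
  ((SimpleGraph.adjMatrix ℝ G).charpoly).roots

section AuxSpectral
open Matrix
set_option linter.unusedSectionVars false

variable {m : Type} [Fintype m] [DecidableEq m]

lemma charpoly_diagonal (d : m → ℝ) :
    (Matrix.diagonal d).charpoly = ∏ i, (X - C (d i)) := by
  have h : charmatrix (Matrix.diagonal d) = Matrix.diagonal (fun i => X - C (d i)) := by
    ext i j
    by_cases hij : i = j
    · subst hij; simp
    · simp [Matrix.charmatrix_apply_ne _ _ _ hij, Matrix.diagonal_apply_ne _ hij,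
        Matrix.diagonal_apply_ne d hij]
  rw [Matrix.charpoly, h, Matrix.det_diagonal]

lemma charpoly_unitary_conj (U : Matrix.unitaryGroup m ℝ) (D : Matrix m m ℝ) :
    ((U : Matrix m m ℝ) * D * star (U : Matrix m m ℝ)).charpoly = D.charpoly := by
  set P : Matrix m m ℝ[X] := (C : ℝ →+* ℝ[X]).mapMatrix (U : Matrix m m ℝ) with hP
  set Q : Matrix m m ℝ[X] := (C : ℝ →+* ℝ[X]).mapMatrix (star (U : Matrix m m ℝ)) with hQ
  have hPQ : P * Q = 1 := by
    rw [hP, hQ, ← RingHom.map_mul, Matrix.mem_unitaryGroup_iff.mp U.2, RingHom.map_one]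
  have hch : charmatrix ((U : Matrix m m ℝ) * D * star (U : Matrix m m ℝ))
      = P * charmatrix D * Q := by
    rw [Matrix.charmatrix, Matrix.charmatrix, mul_sub, sub_mul]
    congr 1
    · -- P * scalar X * Q = scalar X
      have : P * Matrix.scalar m (X : ℝ[X]) = Matrix.scalar m (X : ℝ[X]) * P := by
        ext i j; simp [Matrix.scalar_apply, Matrix.mul_diagonal, Matrix.diagonal_mul, mul_comm]
      rw [this, Matrix.mul_assoc, hPQ, Matrix.mul_one]
    · rw [hP, hQ, ← _root_.map_mul, ← _root_.map_mul]
  rw [Matrix.charpoly, hch, Matrix.det_mul, Matrix.det_mul, mul_comm (P.det),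
    mul_assoc, ← Matrix.det_mul, hPQ, Matrix.det_one, mul_one, Matrix.charpoly]

lemma charpoly_hermitian_eq_prod (A : Matrix m m ℝ) (hA : A.IsHermitian) :
    A.charpoly = ∏ i, (X - C (hA.eigenvalues i)) := by
  conv_lhs => rw [hA.spectral_theorem]
  rw [Unitary.conjStarAlgAut_apply, charpoly_unitary_conj]
  have : Matrix.diagonal (RCLike.ofReal ∘ hA.eigenvalues) = Matrix.diagonal hA.eigenvalues := by
    congr 1
  rw [this, _root_.charpoly_diagonal]

lemma roots_charpoly_hermitian (A : Matrix m m ℝ) (hA : A.IsHermitian) :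
    A.charpoly.roots = Finset.univ.val.map hA.eigenvalues := by
  rw [charpoly_hermitian_eq_prod A hA]
  have : ∏ i, (X - C (hA.eigenvalues i))
      = ((Finset.univ.val.map hA.eigenvalues).map (fun a => X - C a)).prod := by
    rw [Multiset.map_map]; rfl
  rw [this, Polynomial.roots_multiset_prod_X_sub_C]

lemma eval_charpoly' (A : Matrix m m ℝ) (μ : ℝ) :
    A.charpoly.eval μ = (Matrix.scalar m μ - A).det := by
  rw [Matrix.charpoly, eval_det, matPolyEquiv_charmatrix]
  simp

lemma scalar_sub_mulVec (A : Matrix m m ℝ) (μ : ℝ) (x : m → ℝ) :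
    (Matrix.scalar m μ - A) *ᵥ x = μ • x - A *ᵥ x := by
  funext v
  simp [Matrix.sub_mulVec, Matrix.scalar, Matrix.mulVec_diagonal]

variable (G : SimpleGraph m) [DecidableRel G.Adj]


lemma mem_adjEigs_of_eigenvector {x : m → ℝ} {μ : ℝ} (hx : x ≠ 0)
    (h : (SimpleGraph.adjMatrix ℝ G) *ᵥ x = μ • x) :
    μ ∈ ((SimpleGraph.adjMatrix ℝ G).charpoly).roots := by
  set A := SimpleGraph.adjMatrix ℝ G
  have hdet : (Matrix.scalar m μ - A).det = 0 := by
    rw [← Matrix.exists_mulVec_eq_zero_iff]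
    exact ⟨x, hx, by rw [scalar_sub_mulVec, h, sub_self]⟩
  rw [Polynomial.mem_roots (A.charpoly_monic.ne_zero)]
  rwa [Polynomial.IsRoot, eval_charpoly']

lemma star_eq_transpose_real (U : Matrix m m ℝ) : star U = Uᵀ := by
  ext i j; simp [Matrix.star_apply]

lemma quadform_le_of_eigs_le {A : Matrix m m ℝ} (hA : A.IsHermitian)
    (h2 : ∀ i, hA.eigenvalues i ≤ 2) (x : m → ℝ) :
    x ⬝ᵥ (A *ᵥ x) ≤ 2 * (x ⬝ᵥ x) := by
  set U : Matrix m m ℝ := (hA.eigenvectorUnitary : Matrix m m ℝ) with hU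
  have hUU : U * star U = 1 := Matrix.mem_unitaryGroup_iff.mp hA.eigenvectorUnitary.2
  set y : m → ℝ := star U *ᵥ x with hy
  have hdiag : Matrix.diagonal (RCLike.ofReal ∘ hA.eigenvalues) = Matrix.diagonal hA.eigenvalues := by
    congr 1
  have h1 : x ⬝ᵥ (A *ᵥ x) = y ⬝ᵥ (Matrix.diagonal hA.eigenvalues *ᵥ y) := by
    conv_lhs => rw [hA.spectral_theorem, hdiag]
    rw [Unitary.conjStarAlgAut_apply, ← Matrix.mulVec_mulVec, ← Matrix.mulVec_mulVec, dotProduct_mulVec x U,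
      ← Matrix.mulVec_transpose, ← star_eq_transpose_real, ← hy]
  have h2' : x ⬝ᵥ x = y ⬝ᵥ y := by
    rw [hy, dotProduct_mulVec (star U *ᵥ x) (star U) x, ← Matrix.mulVec_transpose,
      star_eq_transpose_real, Matrix.transpose_transpose, Matrix.mulVec_mulVec,
      show U * Uᵀ = 1 by rw [← star_eq_transpose_real]; exact hUU,
      Matrix.one_mulVec, dotProduct_comm]
  rw [h1, h2']
  have hexp : y ⬝ᵥ (Matrix.diagonal hA.eigenvalues *ᵥ y) = ∑ i, hA.eigenvalues i * (y i)^2 := by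
    simp [dotProduct, Matrix.mulVec_diagonal]
    apply Finset.sum_congr rfl
    intro i _
    ring
  have hyy : y ⬝ᵥ y = ∑ i, (y i)^2 := by
    simp [dotProduct]
    apply Finset.sum_congr rfl
    intro i _
    ring
  rw [hexp, hyy, Finset.mul_sum]
  apply Finset.sum_le_sum
  intro i _
  exact mul_le_mul_of_nonneg_right (h2 i) (sq_nonneg _)

section
variable (G : SimpleGraph m) [DecidableRel G.Adj]

lemma adjEigs_def : adjEigs G = ((SimpleGraph.adjMatrix ℝ G).charpoly).roots := by
  unfold adjEigs
  congr!

lemma adjMatrix_isHermitian : (SimpleGraph.adjMatrix ℝ G).IsHermitian := by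
  have h := SimpleGraph.isSymm_adjMatrix G (α := ℝ)
  ext i j
  simp only [Matrix.conjTranspose_apply, RCLike.star_def, starRingEnd_apply, star_trivial]
  exact congrFun (congrFun h i) j

lemma adjEigs_eq_eigenvalues :
    adjEigs G = Finset.univ.val.map (adjMatrix_isHermitian G).eigenvalues := by
  rw [adjEigs_def, roots_charpoly_hermitian _ (adjMatrix_isHermitian G)]

lemma eigenvalue_mem_adjEigs (i : m) :
    (adjMatrix_isHermitian G).eigenvalues i ∈ adjEigs G := by
  rw [adjEigs_eq_eigenvalues]
  exact Multiset.mem_map.mpr ⟨i, Finset.mem_univ_val _, rfl⟩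

lemma mem_adjEigs_of_eigenvector' {x : m → ℝ} {μ : ℝ} (hx : x ≠ 0)
    (h : (SimpleGraph.adjMatrix ℝ G) *ᵥ x = μ • x) : μ ∈ adjEigs G := by
  rw [adjEigs_def]
  exact mem_adjEigs_of_eigenvector G hx h

lemma exists_eigenvector_of_mem_adjEigs {μ : ℝ} (hμ : μ ∈ adjEigs G) :
    ∃ x : m → ℝ, x ≠ 0 ∧ (SimpleGraph.adjMatrix ℝ G) *ᵥ x = μ • x := by
  rw [adjEigs_eq_eigenvalues] at hμ
  obtain ⟨i, -, hi⟩ := Multiset.mem_map.mp hμ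
  refine ⟨⇑((adjMatrix_isHermitian G).eigenvectorBasis i), ?_, ?_⟩
  · intro h0
    apply (adjMatrix_isHermitian G).eigenvectorBasis.orthonormal.ne_zero i
    apply PiLp.ext
    intro j
    exact congrFun h0 j
  · rw [(adjMatrix_isHermitian G).mulVec_eigenvectorBasis i, hi]

lemma exists_eig_gt_of_quadform {x : m → ℝ}
    (h : 2 * (x ⬝ᵥ x) < x ⬝ᵥ ((SimpleGraph.adjMatrix ℝ G) *ᵥ x)) :
    ∃ μ ∈ adjEigs G, 2 < μ := by
  by_contra hc
  push_neg at hc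
  have hall : ∀ i, (adjMatrix_isHermitian G).eigenvalues i ≤ 2 :=
    fun i => hc _ (eigenvalue_mem_adjEigs G i)
  have := quadform_le_of_eigs_le (adjMatrix_isHermitian G) hall x
  linarith

end

end AuxSpectral

section GraphLayer
open Matrix
set_option linter.unusedSectionVars false
set_option maxHeartbeats 1000000

variable {n : ℕ} (G : SimpleGraph (Fin n)) [DecidableRel G.Adj]

/-- Extension of a vector on a subtype by zero. -/
noncomputable def extend0 (S : Finset (Fin n)) (w : ↥((S : Set (Fin n))) → ℝ) : Fin n → ℝ :=
  fun v => if h : v ∈ (S : Set (Fin n)) then w ⟨v, h⟩ else 0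

lemma extend0_sq_sum (S : Finset (Fin n)) (w : ↥((S : Set (Fin n))) → ℝ) :
    ∑ v ∈ S, (extend0 S w v)^2 = w ⬝ᵥ w := by
  rw [dotProduct]
  rw [Finset.sum_subtype S (fun x => Finset.mem_coe.symm) (fun v => (extend0 S w v)^2)]
  apply Finset.sum_congr rfl
  intro a _
  simp [extend0, a.2, pow_two]

lemma extend0_quadform (S : Finset (Fin n)) (w : ↥((S : Set (Fin n))) → ℝ)
    [DecidableRel (G.induce (S : Set (Fin n))).Adj] :
    ∑ v ∈ S, ∑ u ∈ S, extend0 S w v * (if G.Adj v u then 1 else 0) * extend0 S w u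
      = w ⬝ᵥ ((SimpleGraph.adjMatrix ℝ (G.induce (S : Set (Fin n)))) *ᵥ w) := by
  rw [dotProduct]
  rw [Finset.sum_subtype S (fun x => Finset.mem_coe.symm)]
  apply Finset.sum_congr rfl
  intro a _
  rw [Matrix.mulVec, dotProduct]
  rw [Finset.sum_subtype S (fun x => Finset.mem_coe.symm)]
  rw [Finset.mul_sum]
  apply Finset.sum_congr rfl
  intro b _
  have h1 : extend0 S w ↑a = w a := by simp [extend0, a.2]
  have h2 : extend0 S w ↑b = w b := by simp [extend0, b.2]
  have h3 : SimpleGraph.adjMatrix ℝ (G.induce (S : Set (Fin n))) a b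
      = (if G.Adj ↑a ↑b then (1:ℝ) else 0) := by
    by_cases h : G.Adj ↑a ↑b
    · simp only [SimpleGraph.adjMatrix_apply, if_pos h]
      rw [if_pos]
      exact h
    · simp only [SimpleGraph.adjMatrix_apply, if_neg h]
      rw [if_neg]
      exact fun hc => h hc
  rw [h1, h2, h3]
  ring

lemma exists_eig_gt_induce (S : Finset (Fin n)) (z : Fin n → ℝ)
    (key : 2 * ∑ v ∈ S, (z v)^2
      < ∑ v ∈ S, ∑ u ∈ S, z v * (if G.Adj v u then 1 else 0) * z u) :
    ∃ μ ∈ adjEigs (G.induce (S : Set (Fin n))), 2 < μ := by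
  classical
  set w : ↥((S : Set (Fin n))) → ℝ := fun a => z a.val with hw
  have hz : ∀ v ∈ S, extend0 S w v = z v := by
    intro v hv
    simp [extend0, Finset.mem_coe.mpr hv, hw]
  apply exists_eig_gt_of_quadform (G.induce (S : Set (Fin n))) (x := w)
  rw [← extend0_quadform G S w, ← extend0_sq_sum S w]
  calc 2 * ∑ v ∈ S, (extend0 S w v)^2 = 2 * ∑ v ∈ S, (z v)^2 := by
        rw [Finset.sum_congr rfl (fun v hv => by rw [hz v hv])]
    _ < ∑ v ∈ S, ∑ u ∈ S, z v * (if G.Adj v u then 1 else 0) * z u := key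
    _ = ∑ v ∈ S, ∑ u ∈ S, extend0 S w v * (if G.Adj v u then 1 else 0) * extend0 S w u := by
        refine Finset.sum_congr rfl (fun v hv => Finset.sum_congr rfl (fun u hu => ?_))
        rw [hz v hv, hz u hu]

lemma idx_mono {N T : Finset (Fin n)} (hNT : N ⊆ T)
    (h : ∃ μ ∈ adjEigs (G.induce (N : Set (Fin n))), 2 < μ) :
    ∃ μ ∈ adjEigs (G.induce (T : Set (Fin n))), 2 < μ := by
  classical
  obtain ⟨μ, hμmem, hμ⟩ := h
  obtain ⟨w, hw0, hweig⟩ := exists_eigenvector_of_mem_adjEigs _ hμmem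
  have hwqf : w ⬝ᵥ ((SimpleGraph.adjMatrix ℝ (G.induce (N : Set (Fin n)))) *ᵥ w)
      = μ * (w ⬝ᵥ w) := by
    rw [hweig, dotProduct_smul, smul_eq_mul]
  have hww : 0 < w ⬝ᵥ w := by
    have h0 : w ⬝ᵥ w = ∑ a, (w a)^2 := by
      rw [dotProduct]
      exact Finset.sum_congr rfl (fun a _ => by ring)
    rw [h0]
    apply Finset.sum_pos'
    · intro a _; exact sq_nonneg _
    · obtain ⟨a, ha⟩ := Function.ne_iff.mp hw0
      exact ⟨a, Finset.mem_univ _, by rw [sq]; exact mul_self_pos.mpr ha⟩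
  have hzout : ∀ v, v ∉ N → extend0 N w v = 0 := by
    intro v hv
    unfold extend0
    rw [dif_neg]
    exact fun h => hv (Finset.mem_coe.mp h)
  set z : Fin n → ℝ := extend0 N w with hzdef
  apply exists_eig_gt_induce G T z
  have e1 : ∑ v ∈ T, (z v)^2 = ∑ v ∈ N, (z v)^2 :=
    (Finset.sum_subset hNT (fun v _ hv => by rw [hzout v hv]; ring)).symm
  have e2 : ∑ v ∈ T, ∑ u ∈ T, z v * (if G.Adj v u then 1 else 0) * z u
      = ∑ v ∈ N, ∑ u ∈ N, z v * (if G.Adj v u then 1 else 0) * z u := by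
    rw [← Finset.sum_subset hNT (fun v _ hv => ?_)]
    · exact Finset.sum_congr rfl (fun v _ =>
        (Finset.sum_subset hNT (fun u _ hu => by rw [hzout u hu]; ring)).symm)
    · apply Finset.sum_eq_zero
      intro u _
      rw [hzout v hv]
      ring
  rw [e1, e2, hzdef, extend0_sq_sum N w, extend0_quadform G N w, hwqf]
  nlinarith [hww, hμ]

lemma sign_split_pos {x : Fin n → ℝ} {μ : ℝ}
    (heig : (SimpleGraph.adjMatrix ℝ G) *ᵥ x = μ • x) (hμ : 2 < μ)
    (hP : ∃ v, 0 < x v) :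
    ∃ μ' ∈ adjEigs
      (G.induce ((Finset.univ.filter (fun v => 0 < x v) : Finset (Fin n)) : Set (Fin n))),
      2 < μ' := by
  classical
  set P : Finset (Fin n) := Finset.univ.filter (fun v => 0 < x v) with hPdef
  have hrow : ∀ v, ∑ u, (if G.Adj v u then (1:ℝ) else 0) * x u = μ * x v := by
    intro v
    have h := congrFun heig v
    rw [Matrix.mulVec, dotProduct] at h
    rw [show (μ • x) v = μ * x v from rfl] at h
    rw [← h]
    apply Finset.sum_congr rfl
    intro u _
    by_cases hadj : G.Adj v u <;> simp [hadj]
  have hPsum : ∀ v ∈ P, μ * x v ≤ ∑ u ∈ P, (if G.Adj v u then (1:ℝ) else 0) * x u := by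
    intro v _
    have hsplit := Finset.sum_filter_add_sum_filter_not Finset.univ (fun v => 0 < x v)
      (fun u => (if G.Adj v u then (1:ℝ) else 0) * x u)
    have hneg : ∑ u ∈ Finset.univ.filter (fun u => ¬ 0 < x u),
        (if G.Adj v u then (1:ℝ) else 0) * x u ≤ 0 := by
      apply Finset.sum_nonpos
      intro u hu
      have hxu : x u ≤ 0 := le_of_not_gt (Finset.mem_filter.mp hu).2
      apply mul_nonpos_of_nonneg_of_nonpos _ hxu
      by_cases hadj : G.Adj v u <;> simp [hadj]
    rw [hrow v] at hsplit
    rw [hPdef]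
    linarith
  apply exists_eig_gt_induce G P x
  have hpos : 0 < ∑ v ∈ P, (x v)^2 := by
    obtain ⟨v, hv⟩ := hP
    apply Finset.sum_pos'
    · intro u _; exact sq_nonneg _
    · exact ⟨v, Finset.mem_filter.mpr ⟨Finset.mem_univ _, hv⟩, by rw [sq]; exact mul_pos hv hv⟩
  have hmain : μ * ∑ v ∈ P, (x v)^2
      ≤ ∑ v ∈ P, ∑ u ∈ P, x v * (if G.Adj v u then 1 else 0) * x u := by
    rw [Finset.mul_sum]
    apply Finset.sum_le_sum
    intro v hv
    have hxv : 0 < x v := (Finset.mem_filter.mp hv).2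
    have h1 : ∑ u ∈ P, x v * (if G.Adj v u then (1:ℝ) else 0) * x u
        = x v * ∑ u ∈ P, (if G.Adj v u then (1:ℝ) else 0) * x u := by
      rw [Finset.mul_sum]
      exact Finset.sum_congr rfl (fun u _ => by ring)
    rw [h1]
    calc μ * x v ^ 2 = x v * (μ * x v) := by ring
      _ ≤ x v * ∑ u ∈ P, (if G.Adj v u then (1:ℝ) else 0) * x u :=
          mul_le_mul_of_nonneg_left (hPsum v hv) (le_of_lt hxv)
  nlinarith [hpos, hμ, hmain]

lemma exists_disjoint_pair
    (h2 : 1 < Multiset.card ((adjEigs G).filter (fun μ => 2 < μ))) :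
    ∃ P N : Finset (Fin n), Disjoint P N ∧
      (∃ μ ∈ adjEigs (G.induce (P : Set (Fin n))), 2 < μ) ∧
      (∃ μ ∈ adjEigs (G.induce (N : Set (Fin n))), 2 < μ) := by
  classical
  have hA := adjMatrix_isHermitian G
  rw [adjEigs_eq_eigenvalues G, Multiset.filter_map, Multiset.card_map,
    ← Finset.filter_val, ← Finset.card_def] at h2
  rw [Finset.one_lt_card] at h2
  obtain ⟨i, hi, j, hj, hij⟩ := h2
  have hi2 : 2 < hA.eigenvalues i := by
    have := (Finset.mem_filter.mp hi).2
    exact this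
  have hj2 : 2 < hA.eigenvalues j := (Finset.mem_filter.mp hj).2
  -- the two eigenvectors
  set xi : Fin n → ℝ := ⇑(hA.eigenvectorBasis i) with hxi
  set xj : Fin n → ℝ := ⇑(hA.eigenvectorBasis j) with hxj
  have heigi : (SimpleGraph.adjMatrix ℝ G) *ᵥ xi = hA.eigenvalues i • xi :=
    hA.mulVec_eigenvectorBasis i
  have heigj : (SimpleGraph.adjMatrix ℝ G) *ᵥ xj = hA.eigenvalues j • xj :=
    hA.mulVec_eigenvectorBasis j
  have hxi0 : xi ≠ 0 := by
    intro h0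
    apply hA.eigenvectorBasis.orthonormal.ne_zero i
    apply PiLp.ext
    intro v
    exact congrFun h0 v
  have hxj0 : xj ≠ 0 := by
    intro h0
    apply hA.eigenvectorBasis.orthonormal.ne_zero j
    apply PiLp.ext
    intro v
    exact congrFun h0 v
  have horth : ∑ v, xi v * xj v = 0 := by
    have h : (inner ℝ (hA.eigenvectorBasis i) (hA.eigenvectorBasis j) : ℝ) = 0 :=
      hA.eigenvectorBasis.orthonormal.2 hij
    rw [EuclideanSpace.inner_eq_star_dotProduct] at h
    simpa [dotProduct, Matrix.star_apply, mul_comm] using h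
  -- helper facts
  have hne : ∀ x : Fin n → ℝ, x ≠ 0 → (∃ v, 0 < x v) ∨ (∃ v, 0 < -x v) := by
    intro x hx
    obtain ⟨v, hv⟩ := Function.ne_iff.mp hx
    rcases lt_or_gt_of_ne hv with h | h
    · exact Or.inr ⟨v, by simpa using h⟩
    · exact Or.inl ⟨v, h⟩
  -- case: some eigenvector changes sign
  by_cases hcase : (∃ v, 0 < xi v) ∧ (∃ v, 0 < -xi v)
  · refine ⟨Finset.univ.filter (fun v => 0 < xi v),
      Finset.univ.filter (fun v => 0 < -xi v), ?_, ?_, ?_⟩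
    · rw [Finset.disjoint_left]
      intro v hv1 hv2
      have h1 := (Finset.mem_filter.mp hv1).2
      have h2 := (Finset.mem_filter.mp hv2).2
      linarith
    · exact sign_split_pos G heigi hi2 hcase.1
    · have heigi' : (SimpleGraph.adjMatrix ℝ G) *ᵥ (-xi) = hA.eigenvalues i • (-xi) := by
        rw [Matrix.mulVec_neg, heigi, smul_neg]
      exact sign_split_pos G heigi' hi2 hcase.2
  by_cases hcase' : (∃ v, 0 < xj v) ∧ (∃ v, 0 < -xj v)
  · refine ⟨Finset.univ.filter (fun v => 0 < xj v),
      Finset.univ.filter (fun v => 0 < -xj v), ?_, ?_, ?_⟩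
    · rw [Finset.disjoint_left]
      intro v hv1 hv2
      have h1 := (Finset.mem_filter.mp hv1).2
      have h2 := (Finset.mem_filter.mp hv2).2
      linarith
    · exact sign_split_pos G heigj hj2 hcase'.1
    · have heigj' : (SimpleGraph.adjMatrix ℝ G) *ᵥ (-xj) = hA.eigenvalues j • (-xj) := by
        rw [Matrix.mulVec_neg, heigj, smul_neg]
      exact sign_split_pos G heigj' hj2 hcase'.2
  -- both eigenvectors are single-signed: normalize to nonnegative ones
  have hsingle : ∀ x : Fin n → ℝ, x ≠ 0 → ¬ ((∃ v, 0 < x v) ∧ (∃ v, 0 < -x v)) →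
      ∃ ε : ℝ, (ε = 1 ∨ ε = -1) ∧ (∀ v, 0 ≤ ε * x v) ∧ (∃ v, 0 < ε * x v) := by
    intro x hx hns
    rcases hne x hx with h | h
    · refine ⟨1, Or.inl rfl, ?_, ?_⟩
      · intro v
        by_contra hc
        push_neg at hc
        exact hns ⟨h, ⟨v, by simpa using by linarith⟩⟩
      · obtain ⟨v, hv⟩ := h
        exact ⟨v, by simpa using hv⟩
    · refine ⟨-1, Or.inr rfl, ?_, ?_⟩
      · intro v
        by_contra hc
        push_neg at hc
        refine hns ⟨⟨v, by nlinarith⟩, h⟩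
      · obtain ⟨v, hv⟩ := h
        exact ⟨v, by simpa using hv⟩
  obtain ⟨ε, hε, hεnn, hεpos⟩ := hsingle xi hxi0 hcase
  obtain ⟨δ, hδ, hδnn, hδpos⟩ := hsingle xj hxj0 hcase'
  set x' : Fin n → ℝ := fun v => ε * xi v with hx'
  set y' : Fin n → ℝ := fun v => δ * xj v with hy'
  have heigx' : (SimpleGraph.adjMatrix ℝ G) *ᵥ x' = hA.eigenvalues i • x' := by
    funext v
    rw [hx']
    have h1 := congrFun heigi v
    rw [Matrix.mulVec, dotProduct] at h1 ⊢
    rw [show ∑ u, SimpleGraph.adjMatrix ℝ G v u * (ε * xi u)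
        = ε * ∑ u, SimpleGraph.adjMatrix ℝ G v u * xi u by
      rw [Finset.mul_sum]; exact Finset.sum_congr rfl (fun u _ => by ring), h1]
    show ε * ((hA.eigenvalues i • xi) v) = hA.eigenvalues i * (ε * xi v)
    show ε * (hA.eigenvalues i * xi v) = hA.eigenvalues i * (ε * xi v)
    ring
  have heigy' : (SimpleGraph.adjMatrix ℝ G) *ᵥ y' = hA.eigenvalues j • y' := by
    funext v
    rw [hy']
    have h1 := congrFun heigj v
    rw [Matrix.mulVec, dotProduct] at h1 ⊢
    rw [show ∑ u, SimpleGraph.adjMatrix ℝ G v u * (δ * xj u)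
        = δ * ∑ u, SimpleGraph.adjMatrix ℝ G v u * xj u by
      rw [Finset.mul_sum]; exact Finset.sum_congr rfl (fun u _ => by ring), h1]
    show δ * (hA.eigenvalues j * xj v) = hA.eigenvalues j * (δ * xj v)
    ring
  have horth' : ∑ v, x' v * y' v = 0 := by
    rw [show ∑ v, x' v * y' v = (ε * δ) * ∑ v, xi v * xj v by
      rw [Finset.mul_sum]; exact Finset.sum_congr rfl (fun v _ => by rw [hx', hy']; ring)]
    rw [horth, mul_zero]
  refine ⟨Finset.univ.filter (fun v => 0 < x' v),
    Finset.univ.filter (fun v => 0 < y' v), ?_, ?_, ?_⟩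
  · rw [Finset.disjoint_left]
    intro v hv1 hv2
    have h1 := (Finset.mem_filter.mp hv1).2
    have h2 := (Finset.mem_filter.mp hv2).2
    have hz : ∀ u ∈ Finset.univ, 0 ≤ x' u * y' u :=
      fun u _ => mul_nonneg (hεnn u) (hδnn u)
    have := (Finset.sum_eq_zero_iff_of_nonneg hz).mp horth' v (Finset.mem_univ v)
    nlinarith
  · exact sign_split_pos G heigx' hi2 hεpos
  · exact sign_split_pos G heigy' hj2 hδpos

lemma exists_minimal_finset (idx : Finset (Fin n) → Prop) :
    ∀ S : Finset (Fin n), idx S → ∃ M, M ⊆ S ∧ idx M ∧ ∀ s, s ⊂ M → ¬ idx s := by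
  classical
  intro S
  induction S using Finset.strongInduction with
  | _ S ih =>
    intro hS
    by_cases h : ∃ s, s ⊂ S ∧ idx s
    · obtain ⟨s, hsub, hs⟩ := h
      obtain ⟨M, hM1, hM2, hM3⟩ := ih s hsub hs
      exact ⟨M, hM1.trans hsub.subset, hM2, hM3⟩
    · push_neg at h
      exact ⟨S, subset_rfl, hS, fun s hs => h s hs⟩

lemma neg_mem_adjEigs (hbip : G.Colorable 2) {μ : ℝ} (hμ : μ ∈ adjEigs G) :
    -μ ∈ adjEigs G := by
  classical
  obtain ⟨x, hx0, hxeig⟩ := exists_eigenvector_of_mem_adjEigs G hμ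
  obtain ⟨c⟩ := hbip
  set d : Fin n → ℝ := fun v => if c v = 0 then 1 else -1 with hd
  have hd0 : ∀ v, d v ≠ 0 := by
    intro v
    rw [hd]
    by_cases h : c v = 0 <;> simp [h]
  have hadj : ∀ v u, G.Adj v u → d u = - d v := by
    intro v u hvu
    have hne := c.valid hvu
    have h2 : ∀ a : Fin 2, a = 0 ∨ a = 1 := by decide
    rw [hd]
    rcases h2 (c v) with h | h <;> rcases h2 (c u) with h' | h'
    · exact absurd (h'.trans h.symm) hne.symm
    · simp [h, h']
    · simp [h, h']
    · exact absurd (h'.trans h.symm) hne.symm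
  set y : Fin n → ℝ := fun v => d v * x v with hy
  apply mem_adjEigs_of_eigenvector' G (x := y) (μ := -μ)
  · intro h0
    obtain ⟨v, hv⟩ := Function.ne_iff.mp hx0
    have := congrFun h0 v
    rw [hy] at this
    simp only [Pi.zero_apply] at this
    exact hv (by
      rcases mul_eq_zero.mp this with h | h
      · exact absurd h (hd0 v)
      · exact h)
  · funext v
    have h1 := congrFun hxeig v
    rw [Matrix.mulVec, dotProduct] at h1 ⊢
    have h2 : ∑ u, SimpleGraph.adjMatrix ℝ G v u * y u
        = ∑ u, SimpleGraph.adjMatrix ℝ G v u * ((- d v) * x u) := by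
      apply Finset.sum_congr rfl
      intro u _
      by_cases hvu : G.Adj v u
      · rw [hy]
        simp only
        rw [hadj v u hvu]
      · simp [SimpleGraph.adjMatrix_apply, hvu]
    rw [h2]
    rw [show ∑ u, SimpleGraph.adjMatrix ℝ G v u * ((- d v) * x u)
        = (- d v) * ∑ u, SimpleGraph.adjMatrix ℝ G v u * x u by
      rw [Finset.mul_sum]; exact Finset.sum_congr rfl (fun u _ => by ring)]
    rw [h1]
    show -d v * (μ * x v) = -μ * (d v * x v)
    ring

end GraphLayer

/-- The property of an induced subgraph having an eigenvalue exceeding 2. -/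
def idxGT {n : ℕ} (G : SimpleGraph (Fin n)) (s : Finset (Fin n)) : Prop :=
  ∃ μ ∈ adjEigs (G.induce (s : Set (Fin n))), 2 < μ

set_option maxHeartbeats 2000000 in
/-- A bipartite graph with an eigenvalue greater than 2, such that for every vertex
subset `M` minimal with respect to having index greater than 2 the complementary induced
subgraph is cyclotomic, is a Salem graph. -/
theorem bipartite_minimal_complement_salem {n : ℕ} (G : SimpleGraph (Fin n))
    (hbip : G.Colorable 2) (hbig : ∃ μ ∈ adjEigs G, 2 < μ)
    (hmin : ∀ M : Finset (Fin n),
      ((∃ μ ∈ adjEigs (G.induce (M : Set (Fin n))), 2 < μ) ∧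
        (∀ s : Finset (Fin n), s ⊂ M → ∀ μ ∈ adjEigs (G.induce (s : Set (Fin n))), μ ≤ 2)) →
      ∀ μ ∈ adjEigs (G.induce ((Mᶜ : Finset (Fin n)) : Set (Fin n))), -2 ≤ μ ∧ μ ≤ 2) :
    ∃ lam ∈ adjEigs G, 2 < lam ∧
      Multiset.card ((adjEigs G).filter (fun μ => 2 < μ)) = 1 ∧
      ∀ μ ∈ adjEigs G, μ < -2 → μ = -lam := by
  classical
  obtain ⟨lam, hlammem, hlam⟩ := hbig
  have hlamf : lam ∈ (adjEigs G).filter (fun μ => 2 < μ) :=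
    Multiset.mem_filter.mpr ⟨hlammem, hlam⟩
  have hcard : Multiset.card ((adjEigs G).filter (fun μ => 2 < μ)) = 1 := by
    by_contra hne
    have hpos : 0 < Multiset.card ((adjEigs G).filter (fun μ => 2 < μ)) :=
      Multiset.card_pos.mpr (fun h0 => by rw [h0] at hlamf; exact absurd hlamf (Multiset.notMem_zero _))
    have h2 : 1 < Multiset.card ((adjEigs G).filter (fun μ => 2 < μ)) := by omega
    obtain ⟨P, N, hdisj, hP, hN⟩ := exists_disjoint_pair G h2
    obtain ⟨M, hMP, hMidx, hMmin⟩ := exists_minimal_finset (idxGT G) P hP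
    have hprem : (∃ μ ∈ adjEigs (G.induce (M : Set (Fin n))), 2 < μ) ∧
        (∀ s : Finset (Fin n), s ⊂ M → ∀ μ ∈ adjEigs (G.induce (s : Set (Fin n))), μ ≤ 2) := by
      refine ⟨hMidx, fun s hs μ hμ => ?_⟩
      by_contra hgt
      push_neg at hgt
      exact hMmin s hs ⟨μ, hμ, hgt⟩

    have hcyc := hmin M hprem
    have hNMc : N ⊆ Mᶜ := by
      intro v hv
      rw [Finset.mem_compl]
      intro hvM
      exact (Finset.disjoint_left.mp hdisj) (hMP hvM) hv
    obtain ⟨μ, hμmem, hμ2⟩ := idx_mono G hNMc hN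
    exact absurd (hcyc μ hμmem).2 (not_le.mpr hμ2)
  refine ⟨lam, hlammem, hlam, hcard, ?_⟩
  intro μ hμmem hμlt
  have h1 : -μ ∈ adjEigs G := neg_mem_adjEigs G hbip hμmem
  have h2 : -μ ∈ (adjEigs G).filter (fun ν => 2 < ν) :=
    Multiset.mem_filter.mpr ⟨h1, by linarith⟩
  obtain ⟨a, ha⟩ := Multiset.card_eq_one.mp hcard
  rw [ha, Multiset.mem_singleton] at h2 hlamf
  rw [← h2.trans hlamf.symm]
  ring
end

section
/- Let G be a nonbipartite finite simple graph that has at least one eigenvalue greater than 2, that is (isomorphic to) the line graph of some finite simple graph, and that contains a vertex v such that the induced subgraph on V(G) − {v} is cyclotomic. Then G is a Salem graph; that is, G has exactly one eigenvalue greater than 2 and no eigenvalue less than −2. -/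
open Polynomial

section Aux

open Matrix

variable {n' : Type} [Fintype n'] [DecidableEq n']

private lemma charmatrix_diag' (d : n' → ℝ) :
    charmatrix (Matrix.diagonal d) = Matrix.diagonal (fun i => X - C (d i)) := by
  ext i j
  by_cases h : i = j
  · subst h; simp [charmatrix_apply]
  · simp [charmatrix_apply, Matrix.diagonal_apply_ne _ h, h]

private lemma charpoly_diag' (d : n' → ℝ) :
    (Matrix.diagonal d).charpoly = ∏ i, (X - C (d i)) := by
  rw [Matrix.charpoly, charmatrix_diag', Matrix.det_diagonal]

/-- charpoly of a real symmetric matrix as product over eigenvalues -/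
private lemma charpoly_isHermitian_real {A : Matrix n' n' ℝ} (hA : A.IsHermitian) :
    A.charpoly = ((Finset.univ.val.map hA.eigenvalues).map (fun r => X - C r)).prod := by
  classical
  set U : Matrix n' n' ℝ := (hA.eigenvectorUnitary : Matrix n' n' ℝ) with hU
  have hUU : U * star U = 1 := (Matrix.mem_unitaryGroup_iff).mp hA.eigenvectorUnitary.2
  have hspec : A = U * Matrix.diagonal hA.eigenvalues * star U := by
    have := hA.spectral_theorem
    simpa [RCLike.ofReal_real_eq_id, Function.comp] using this
  set Φ : Matrix n' n' ℝ →+* Matrix n' n' ℝ[X] :=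
    RingHom.mapMatrix (m := n') (Polynomial.C : ℝ →+* ℝ[X]) with hΦ
  have key : charmatrix A = Φ U * charmatrix (Matrix.diagonal hA.eigenvalues) * Φ (star U) := by
    rw [charmatrix, charmatrix, mul_sub, sub_mul]
    congr 1
    · have hc : Φ U * Matrix.scalar n' (X : ℝ[X]) = Matrix.scalar n' (X : ℝ[X]) * Φ U :=
        (Matrix.scalar_commute (X : ℝ[X]) (fun r => Commute.all _ _) (Φ U)).symm
      rw [hc, mul_assoc, ← _root_.map_mul, hUU, _root_.map_one, mul_one]
    · show Φ A = Φ U * Φ (Matrix.diagonal hA.eigenvalues) * Φ (star U)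
      conv_lhs => rw [hspec]
      rw [_root_.map_mul, _root_.map_mul]
  have hdet : A.charpoly = (Matrix.diagonal hA.eigenvalues).charpoly := by
    rw [Matrix.charpoly, Matrix.charpoly, key, Matrix.det_mul, Matrix.det_mul]
    have h1 : Φ (star U) * Φ U = 1 := by
      rw [← _root_.map_mul, (Matrix.mem_unitaryGroup_iff').mp hA.eigenvectorUnitary.2,
        _root_.map_one]
    have h2 : (Φ U).det * (Φ (star U)).det = 1 := by
      rw [mul_comm, ← Matrix.det_mul, h1, Matrix.det_one]
    rw [mul_right_comm, h2, one_mul]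
  rw [hdet, charpoly_diag']
  rw [Multiset.map_map]
  rw [Finset.prod]
  rfl

private lemma quadform_eigen {A : Matrix n' n' ℝ} (hA : A.IsHermitian) (x : n' → ℝ) :
    x ⬝ᵥ (A *ᵥ x) =
      ∑ i, hA.eigenvalues i * ((star (hA.eigenvectorUnitary : Matrix n' n' ℝ) *ᵥ x) i)^2 ∧
    x ⬝ᵥ x = ∑ i, ((star (hA.eigenvectorUnitary : Matrix n' n' ℝ) *ᵥ x) i)^2 := by
  set U : Matrix n' n' ℝ := (hA.eigenvectorUnitary : Matrix n' n' ℝ) with hU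
  have hUU : U * star U = 1 := (Matrix.mem_unitaryGroup_iff).mp hA.eigenvectorUnitary.2
  have hst : star U = Uᵀ := Matrix.conjTranspose_eq_transpose_of_trivial U
  set z : n' → ℝ := star U *ᵥ x with hz
  have hxz : x ⬝ᵥ (U *ᵥ z) = x ⬝ᵥ x := by
    rw [Matrix.mulVec_mulVec, hUU, Matrix.one_mulVec]
  have hdot : ∀ w : n' → ℝ, x ⬝ᵥ (U *ᵥ w) = z ⬝ᵥ w := by
    intro w
    rw [Matrix.dotProduct_mulVec, hz, hst, Matrix.mulVec_transpose]
  constructor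
  · have hspec : A = U * Matrix.diagonal hA.eigenvalues * star U := by
      have := hA.spectral_theorem
      simpa [RCLike.ofReal_real_eq_id, Function.comp] using this
    conv_lhs => rw [hspec]
    rw [← Matrix.mulVec_mulVec, ← Matrix.mulVec_mulVec, hdot]
    rw [dotProduct]
    refine Finset.sum_congr rfl fun i _ => ?_
    rw [Matrix.mulVec_diagonal]
    ring
  · have := hdot z
    rw [hxz] at this
    rw [this, dotProduct]
    refine Finset.sum_congr rfl fun i _ => ?_
    ring

private lemma star_mulVec_unitary {A : Matrix n' n' ℝ} (hA : A.IsHermitian) (z : n' → ℝ) :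
    star (hA.eigenvectorUnitary : Matrix n' n' ℝ) *ᵥ
      ((hA.eigenvectorUnitary : Matrix n' n' ℝ) *ᵥ z) = z := by
  rw [Matrix.mulVec_mulVec, (Matrix.mem_unitaryGroup_iff').mp hA.eigenvectorUnitary.2,
    Matrix.one_mulVec]

private lemma pair_count_eq {m : ℕ} (s t : Sym2 (Fin m)) (hs : ¬ s.IsDiag) :
    (∑ w : Fin m, (if w ∈ s then (1:ℝ) else 0) * (if w ∈ t then (1:ℝ) else 0)) =
      if s = t then 2 else if ∃ w, w ∈ s ∧ w ∈ t then 1 else 0 := by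
  classical
  have hsum : (∑ w : Fin m, (if w ∈ s then (1:ℝ) else 0) * (if w ∈ t then (1:ℝ) else 0)) =
      ((Finset.univ.filter (fun w => w ∈ s ∧ w ∈ t)).card : ℝ) := by
    rw [Finset.card_filter]
    push_cast
    refine Finset.sum_congr rfl fun w _ => ?_
    by_cases h1 : w ∈ s <;> by_cases h2 : w ∈ t <;> simp [h1, h2]
  rw [hsum]
  by_cases hst : s = t
  · subst hst
    simp only [if_pos rfl]
    induction s using Sym2.ind with
    | _ a b =>
      have hab : a ≠ b := by simpa using hs
      have : (Finset.univ.filter (fun w => w ∈ s(a, b) ∧ w ∈ s(a, b))) = {a, b} := by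
        ext w
        simp [Sym2.mem_iff]
      rw [this, Finset.card_pair hab]
      norm_num
  · rw [if_neg hst]
    by_cases hc : ∃ w, w ∈ s ∧ w ∈ t
    · obtain ⟨c, hcs, hct⟩ := hc
      rw [if_pos ⟨c, hcs, hct⟩]
      have : (Finset.univ.filter (fun w => w ∈ s ∧ w ∈ t)) = {c} := by
        ext w
        simp only [Finset.mem_filter, Finset.mem_univ, true_and, Finset.mem_singleton]
        constructor
        · rintro ⟨hws, hwt⟩
          by_contra hw
          exact hst (Sym2.eq_of_ne_mem hw hws hcs hwt hct)
        · rintro rfl; exact ⟨hcs, hct⟩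
      rw [this]; simp
    · rw [if_neg hc]
      have : (Finset.univ.filter (fun w => w ∈ s ∧ w ∈ t)) = ∅ := by
        ext w
        simp only [Finset.mem_filter, Finset.mem_univ, true_and, Finset.notMem_empty, iff_false]
        exact fun h => hc ⟨w, h⟩
      rw [this]; simp

private lemma lineGraph_adjMatrix_posSemidef {n m : ℕ} (G : SimpleGraph (Fin n))
    [DecidableRel G.Adj] (H : SimpleGraph (Fin m)) (e : G ≃g H.lineGraph) :
    (G.adjMatrix ℝ + (2:ℝ) • 1).PosSemidef := by
  classical
  set N : Matrix (Fin m) (Fin n) ℝ :=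
    Matrix.of (fun w i => if w ∈ ((e i : H.edgeSet) : Sym2 (Fin m)) then (1:ℝ) else 0) with hN
  have key : Nᴴ * N = G.adjMatrix ℝ + (2:ℝ) • 1 := by
    ext i j
    rw [Matrix.mul_apply]
    have : ∀ w, Nᴴ i w * N w j =
        (if w ∈ ((e i : H.edgeSet) : Sym2 (Fin m)) then (1:ℝ) else 0) *
        (if w ∈ ((e j : H.edgeSet) : Sym2 (Fin m)) then (1:ℝ) else 0) := by
      intro w
      simp [hN, Matrix.conjTranspose_apply]
    rw [Finset.sum_congr rfl (fun w _ => this w)]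
    rw [pair_count_eq _ _ (H.not_isDiag_of_mem_edgeSet (e i).2)]
    have hadj : G.Adj i j ↔ ((e i ≠ e j) ∧ ∃ w, w ∈ ((e i : H.edgeSet) : Sym2 (Fin m)) ∧
        w ∈ ((e j : H.edgeSet) : Sym2 (Fin m))) := by
      rw [← e.map_adj_iff, SimpleGraph.lineGraph_adj_iff_exists]
    by_cases hij : i = j
    · subst hij
      simp [Matrix.one_apply]
    · have hee : (e i : H.edgeSet) ≠ e j := fun h => hij (e.injective (Subtype.ext ?_))
      · rw [if_neg (fun h => hee (Subtype.ext h))]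
        by_cases hadj' : G.Adj i j
        · rw [if_pos (hadj.mp hadj').2]
          simp [hadj', Matrix.one_apply, hij]
        · rw [if_neg]
          · simp [hadj', Matrix.one_apply, hij]
          · intro hw
            exact hadj' (hadj.mpr ⟨hee, hw⟩)
      · exact congrArg Subtype.val h
  rw [← key]
  exact Matrix.posSemidef_conjTranspose_mul_self N

end Aux

open Matrix

private lemma adjEigs_def_s8 {V : Type} [Fintype V] (G : SimpleGraph V) [de : DecidableEq V]
    [dr : DecidableRel G.Adj] :
    adjEigs G = ((SimpleGraph.adjMatrix ℝ G).charpoly).roots := by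
  unfold adjEigs
  congr!

private lemma adjEigs_eq_eigenvalues_s8 {V : Type} [Fintype V] (G : SimpleGraph V) [DecidableEq V]
    [DecidableRel G.Adj] (hA : (G.adjMatrix ℝ).IsHermitian) :
    adjEigs G = Finset.univ.val.map hA.eigenvalues := by
  rw [adjEigs_def_s8, charpoly_isHermitian_real hA, Polynomial.roots_multiset_prod_X_sub_C]

private lemma adjMatrix_isHermitian_s8 {V : Type} [Fintype V] [DecidableEq V] (G : SimpleGraph V)
    [DecidableRel G.Adj] : (G.adjMatrix ℝ).IsHermitian := by
  rw [Matrix.IsHermitian, Matrix.conjTranspose_eq_transpose_of_trivial,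
    SimpleGraph.transpose_adjMatrix]

/-- A nonbipartite line graph with an eigenvalue greater than 2, all of whose eigenvalues
after deleting some vertex `v` lie in `[-2,2]`, is a Salem graph: it has exactly one
eigenvalue greater than 2 and no eigenvalue less than `-2`. -/
theorem nonbipartite_line_graph_salem {n : ℕ} (G : SimpleGraph (Fin n))
    (hnonbip : ¬ G.Colorable 2) (hbig : ∃ μ ∈ adjEigs G, 2 < μ)
    (hline : ∃ (m : ℕ) (H : SimpleGraph (Fin m)), Nonempty (G ≃g H.lineGraph))
    (v : Fin n)
    (hcyc : ∀ μ ∈ adjEigs (G.induce ((({v}ᶜ : Finset (Fin n)) : Set (Fin n)))),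
      -2 ≤ μ ∧ μ ≤ 2) :
    Multiset.card ((adjEigs G).filter (fun μ => 2 < μ)) = 1 ∧
    ∀ μ ∈ adjEigs G, -2 ≤ μ := by
  classical
  obtain ⟨m, H, ⟨e⟩⟩ := hline
  have hA : (G.adjMatrix ℝ).IsHermitian := adjMatrix_isHermitian_s8 G
  have hroots : adjEigs G = Finset.univ.val.map hA.eigenvalues :=
    adjEigs_eq_eigenvalues_s8 G hA
  -- Part 2 : all eigenvalues are at least -2
  have part2 : ∀ μ ∈ adjEigs G, -2 ≤ μ := by
    intro μ hμ
    rw [hroots, Multiset.mem_map] at hμ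
    obtain ⟨i, -, rfl⟩ := hμ
    have hPSD := lineGraph_adjMatrix_posSemidef G H e
    set x : Fin n → ℝ := ⇑(hA.eigenvectorBasis i) with hx
    have hx0 : x ≠ 0 := by
      intro h
      exact hA.eigenvectorBasis.orthonormal.ne_zero i (by ext j; exact congrFun h j)
    have hxx : 0 < x ⬝ᵥ x := by
      rcases eq_or_lt_of_le (Finset.sum_nonneg fun i _ => mul_self_nonneg (x i)) with h | h
      · exact absurd (dotProduct_self_eq_zero.mp h.symm) hx0
      · exact h
    have h2 := hPSD.dotProduct_mulVec_nonneg x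
    have hst : star x = x := by simp
    rw [hst] at h2
    have hmul : (G.adjMatrix ℝ + (2:ℝ) • 1) *ᵥ x = (hA.eigenvalues i + 2) • x := by
      rw [Matrix.add_mulVec, hA.mulVec_eigenvectorBasis, Matrix.smul_mulVec,
        Matrix.one_mulVec, add_smul]
    rw [hmul, dotProduct_smul, smul_eq_mul] at h2
    nlinarith
  refine ⟨?_, part2⟩
  -- Part 1 : exactly one eigenvalue greater than 2
  set S : Finset (Fin n) := Finset.univ.filter (fun i => 2 < hA.eigenvalues i) with hS
  have hcard : Multiset.card ((adjEigs G).filter fun μ => 2 < μ) = S.card := by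
    rw [hroots, Multiset.filter_map, Multiset.card_map]
    rfl
  rw [hcard]
  obtain ⟨μ, hμ, hμ2⟩ := hbig
  rw [hroots, Multiset.mem_map] at hμ
  obtain ⟨i0, -, rfl⟩ := hμ
  have hne : S.Nonempty := ⟨i0, by simp [hS, hμ2]⟩
  have hone : ∀ i ∈ S, ∀ j ∈ S, i = j := by
    intro i hi j hj
    by_contra hij
    simp only [hS, Finset.mem_filter, Finset.mem_univ, true_and] at hi hj
    -- build a vector x with x v = 0 and xᵀ A x > 2 xᵀx
    set U : Matrix (Fin n) (Fin n) ℝ := (hA.eigenvectorUnitary : Matrix (Fin n) (Fin n) ℝ)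
      with hU
    obtain ⟨p, q, hpq0, hlin⟩ : ∃ p q : ℝ, ¬(p = 0 ∧ q = 0) ∧ p * U v i + q * U v j = 0 := by
      by_cases h : U v i = 0 ∧ U v j = 0
      · exact ⟨1, 0, by simp, by simp [h.1]⟩
      · refine ⟨U v j, -(U v i), ?_, by ring⟩
        intro hh
        exact h ⟨neg_eq_zero.mp hh.2, hh.1⟩
    set z : Fin n → ℝ := fun k => if k = i then p else if k = j then q else 0 with hz
    have hzvals : z i = p ∧ z j = q ∧ ∀ k, k ≠ i → k ≠ j → z k = 0 := by
      refine ⟨by simp [hz], by simp [hz, Ne.symm hij], ?_⟩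
      intro k hk1 hk2
      simp [hz, hk1, hk2]
    set x : Fin n → ℝ := U *ᵥ z with hxdef
    have hzx : star U *ᵥ x = z := star_mulVec_unitary hA z
    have hxv : x v = 0 := by
      have hxv' : x v = ∑ k, U v k * z k := rfl
      have hxv'' : x v = p * U v i + q * U v j := by
        rw [hxv', ← Finset.sum_subset (Finset.subset_univ ({i, j} : Finset (Fin n)))]
        · rw [Finset.sum_pair hij, hzvals.1, hzvals.2.1]; ring
        · intro k _ hk
          simp only [Finset.mem_insert, Finset.mem_singleton, not_or] at hk
          rw [hzvals.2.2 k hk.1 hk.2, mul_zero]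
      rw [hxv'', hlin]
    obtain ⟨hq1, hq2⟩ := quadform_eigen hA x
    rw [hzx] at hq1 hq2
    have hsum1 : ∑ k, hA.eigenvalues k * (z k)^2 =
        hA.eigenvalues i * p^2 + hA.eigenvalues j * q^2 := by
      rw [← Finset.sum_subset (Finset.subset_univ ({i, j} : Finset (Fin n)))]
      · rw [Finset.sum_pair hij, hzvals.1, hzvals.2.1]
      · intro k _ hk
        simp only [Finset.mem_insert, Finset.mem_singleton, not_or] at hk
        rw [hzvals.2.2 k hk.1 hk.2]
        ring
    have hsum2 : ∑ k, (z k)^2 = p^2 + q^2 := by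
      rw [← Finset.sum_subset (Finset.subset_univ ({i, j} : Finset (Fin n)))]
      · rw [Finset.sum_pair hij, hzvals.1, hzvals.2.1]
      · intro k _ hk
        simp only [Finset.mem_insert, Finset.mem_singleton, not_or] at hk
        rw [hzvals.2.2 k hk.1 hk.2]
        ring
    have hpq : 0 < p^2 + q^2 := by
      rcases not_and_or.mp hpq0 with h | h
      · have : 0 < p^2 := by positivity
        nlinarith [sq_nonneg q]
      · have : 0 < q^2 := by positivity
        nlinarith [sq_nonneg p]
    have hstrict : 2 * (x ⬝ᵥ x) < x ⬝ᵥ (G.adjMatrix ℝ *ᵥ x) := by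
      rw [hq1, hq2, hsum1, hsum2]
      rcases not_and_or.mp hpq0 with h | h
      · have h1 : 2 * p^2 < hA.eigenvalues i * p^2 := by
          have : 0 < p^2 := by positivity
          nlinarith
        nlinarith [sq_nonneg q, hj]
      · have h1 : 2 * q^2 < hA.eigenvalues j * q^2 := by
          have : 0 < q^2 := by positivity
          nlinarith
        nlinarith [sq_nonneg p, hi]
    -- now restrict to the vertex-deleted subgraph
    set s : Set (Fin n) := (({v}ᶜ : Finset (Fin n)) : Set (Fin n)) with hsdef
    set G' := G.induce s with hG'
    have hB : ((G').adjMatrix ℝ).IsHermitian := adjMatrix_isHermitian_s8 G'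
    have hBroots : adjEigs G' = Finset.univ.val.map hB.eigenvalues :=
      adjEigs_eq_eigenvalues_s8 G' hB
    have hBle : ∀ k, hB.eigenvalues k ≤ 2 := by
      intro k
      refine (hcyc _ ?_).2
      rw [hBroots]
      exact Multiset.mem_map_of_mem _ (Finset.mem_val.mpr (Finset.mem_univ k))
    set y : s → ℝ := fun a => x a.1 with hy
    have hBA : ∀ a b : s, (G').adjMatrix ℝ a b = G.adjMatrix ℝ a.1 b.1 := by
      intro a b
      simp [hG', SimpleGraph.comap_adj]
    have hmemiff : ∀ k : Fin n, k ∈ ({v}ᶜ : Finset (Fin n)) ↔ k ∈ s := by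
      intro k; simp [hsdef]
    have hsum_single : ∀ f : Fin n → ℝ, f v = 0 → (∑ a : s, f a.1) = ∑ k, f k := by
      intro f hf
      rw [← Finset.sum_subtype ({v}ᶜ : Finset (Fin n)) hmemiff f]
      have := Finset.sum_compl_add_sum ({v} : Finset (Fin n)) f
      rw [Finset.sum_singleton, hf, add_zero] at this
      exact this
    have hyy : y ⬝ᵥ y = x ⬝ᵥ x := by
      rw [dotProduct, dotProduct]
      exact hsum_single (fun k => x k * x k) (by simp [hxv])
    have hyBy : y ⬝ᵥ ((G').adjMatrix ℝ *ᵥ y) = x ⬝ᵥ (G.adjMatrix ℝ *ᵥ x) := by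
      rw [dotProduct, dotProduct]
      have inner_eq : ∀ a : s, y a * ((G').adjMatrix ℝ *ᵥ y) a =
          x a.1 * ((G.adjMatrix ℝ *ᵥ x) a.1) := by
        intro a
        rw [Matrix.mulVec, Matrix.mulVec, dotProduct, dotProduct]
        congr 1
        rw [show (∑ b : s, (G').adjMatrix ℝ a b * y b) =
            ∑ b : s, (fun k => G.adjMatrix ℝ a.1 k * x k) b.1 from
          Finset.sum_congr rfl fun b _ => by rw [hBA, hy]]
        exact hsum_single (fun k => G.adjMatrix ℝ a.1 k * x k) (by simp [hxv])
      rw [Finset.sum_congr rfl fun a _ => inner_eq a]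
      exact hsum_single (fun k => x k * (G.adjMatrix ℝ *ᵥ x) k) (by simp [hxv])
    obtain ⟨hqB1, hqB2⟩ := quadform_eigen hB y
    have hBbound : y ⬝ᵥ ((G').adjMatrix ℝ *ᵥ y) ≤ 2 * (y ⬝ᵥ y) := by
      rw [hqB1, hqB2, Finset.mul_sum]
      refine Finset.sum_le_sum fun k _ => ?_
      exact mul_le_mul_of_nonneg_right (hBle k) (sq_nonneg _)
    rw [hyBy, hyy] at hBbound
    linarith
  have h1 : S.card ≤ 1 := Finset.card_le_one.mpr hone
  have h2 : 1 ≤ S.card := Finset.card_pos.mpr hne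
  omega
end
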